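/- Let b ≥ 2 be an integer with b ≡ 87 (mod 11184810) and let t be a positive integer with t ≡ 59 (mod 120). Then the b-repdigit 41·(b^t − 1)/(b − 1) is a Sierpiński number. -/
import Mathlib


/-- A number is composite if it is a product of two integers greater than 1. -/
def IsComposite (n : ℕ) : Prop := ∃ a b : ℕ, 1 < a ∧ 1 < b ∧ n = a * b

/-- A Sierpiński number is an odd positive integer `k` such that `k·2^n + 1` is composite
for every positive integer `n`. -/
def IsSierpinski (k : ℕ) : Prop := 0 < k ∧ Odd k ∧ ∀ n : ℕ, 0 < n → IsComposite (k * 2 ^ n + 1)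

set_option maxRecDepth 10000

/-- The repunit quotient equals the geometric sum. -/
lemma repunit_eq_geom (b t : ℕ) (hb : 2 ≤ b) :
    (b ^ t - 1) / (b - 1) = ∑ i ∈ Finset.range t, b ^ i := by
  have key : ∀ s : ℕ, (b ^ s - 1) = (∑ i ∈ Finset.range s, b ^ i) * (b - 1) := by
    intro s
    induction s with
    | zero => simp
    | succ s ih =>
      have h1 : 1 ≤ b ^ s := Nat.one_le_pow _ _ (by omega)
      have h2 : b ^ s ≤ b ^ (s + 1) := Nat.pow_le_pow_right (by omega) (by omega)
      have h3 : b ^ s * (b - 1) = b ^ (s+1) - b ^ s := by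
        rw [Nat.mul_sub, mul_one, pow_succ, mul_comm (b^s) b]
      rw [Finset.sum_range_succ, add_mul, ← ih, h3]
      omega
  rw [key t]
  exact Nat.mul_div_cancel _ (by omega)

/-- Evaluate a geometric sum in `ZMod p` given periodicity data. -/
lemma geom_val {p : ℕ} (t : ℕ) (u v c : ZMod p) (hv : v * (u - 1) = 1)
    (hut : u ^ t = u ^ 59) (hc : (u - 1) * c = u ^ 59 - 1) :
    ∑ i ∈ Finset.range t, u ^ i = c := by
  have hg : (∑ i ∈ Finset.range t, u ^ i) * (u - 1) = u ^ t - 1 := geom_sum_mul u t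
  rw [hut, ← hc, mul_comm (u-1) c] at hg
  calc ∑ i ∈ Finset.range t, u ^ i
      = (∑ i ∈ Finset.range t, u ^ i) * ((u - 1) * v) := by
        rw [mul_comm (u-1) v, hv, mul_one]
    _ = ((∑ i ∈ Finset.range t, u ^ i) * (u - 1)) * v := by ring
    _ = (c * (u - 1)) * v := by rw [hg]
    _ = c * ((u - 1) * v) := by ring
    _ = c := by rw [mul_comm (u-1) v, hv, mul_one]

lemma cast_S (b t p : ℕ) (hp : p ∣ 11184810) (hbmod : b ≡ 87 [MOD 11184810]) :
    ((∑ i ∈ Finset.range t, b ^ i : ℕ) : ZMod p) = ∑ i ∈ Finset.range t, (87 : ZMod p) ^ i := by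
  have hb : (b : ZMod p) = ((87 : ℕ) : ZMod p) :=
    (ZMod.natCast_eq_natCast_iff _ _ _).mpr (hbmod.of_dvd hp)
  push_cast
  rw [hb]
  push_cast
  rfl

/-- Let `b ≥ 2` be an integer with `b ≡ 87 (mod 11184810)` and let `t`
be a positive integer with `t ≡ 59 (mod 120)`. Then the `b`-repdigit
`41·(b^t − 1)/(b − 1)` is a Sierpiński number. -/
theorem stmt_10 (b t : ℕ) (hb : 2 ≤ b) (hbmod : b ≡ 87 [MOD 11184810])
    (ht : 0 < t) (htmod : t ≡ 59 [MOD 120]) :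
    IsSierpinski (41 * ((b ^ t - 1) / (b - 1))) := by
  have ht120 : t % 120 = 59 := htmod
  have hb87 : b % 11184810 = 87 := hbmod
  have htge : 59 ≤ t := by omega
  have hbge : 87 ≤ b := by omega
  set S : ℕ := ∑ i ∈ Finset.range t, b ^ i with hS
  have hrep : (b ^ t - 1) / (b - 1) = S := repunit_eq_geom b t hb
  rw [hrep]
  set k : ℕ := 41 * S with hk
  -- lower bound on S
  have hSge : b ≤ S := by
    have : b ^ 1 ≤ S :=
      Finset.single_le_sum (f := fun i => b ^ i) (fun i _ => Nat.zero_le _)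
        (Finset.mem_range.mpr (by omega))
    simpa using this
  have hkge : 3567 ≤ k := by
    have : 41 * 87 ≤ 41 * S := Nat.mul_le_mul_left _ (by omega)
    omega
  -- split t for power computations
  have htdecomp : t = 120 * (t / 120) + 59 := by omega
  have hut : ∀ (p : ℕ) (h120 : (87 : ZMod p) ^ 120 = 1),
      (87 : ZMod p) ^ t = (87 : ZMod p) ^ 59 := by
    intro p h120
    conv_lhs => rw [htdecomp]
    rw [pow_add, pow_mul, h120, one_pow, one_mul]
  -- S mod each prime
  have hS3 : ((S : ℕ) : ZMod 3) = 1 := by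
    rw [cast_S b t 3 (by norm_num) hbmod]
    refine geom_val t _ (-1) 1 (by decide) ?_ (by decide)
    have h870 : (87 : ZMod 3) = 0 := by decide
    rw [h870, zero_pow (by omega), zero_pow (by norm_num)]
  have hS5 : ((S : ℕ) : ZMod 5) = 2 := by
    rw [cast_S b t 5 (by norm_num) hbmod]
    exact geom_val t _ 1 2 (by decide) (hut 5 (by decide)) (by decide)
  have hS7 : ((S : ℕ) : ZMod 7) = 2 := by
    rw [cast_S b t 7 (by norm_num) hbmod]
    exact geom_val t _ 4 2 (by decide) (hut 7 (by decide)) (by decide)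
  have hS13 : ((S : ℕ) : ZMod 13) = 10 := by
    rw [cast_S b t 13 (by norm_num) hbmod]
    exact geom_val t _ 5 10 (by decide) (hut 13 (by decide)) (by decide)
  have hS17 : ((S : ℕ) : ZMod 17) = 7 := by
    rw [cast_S b t 17 (by norm_num) hbmod]
    exact geom_val t _ 1 7 (by decide) (hut 17 (by decide)) (by decide)
  have hS241 : ((S : ℕ) : ZMod 241) = 36 := by
    rw [cast_S b t 241 (by norm_num) hbmod]
    exact geom_val t _ 227 36 (by decide) (hut 241 (by decide)) (by decide)
  -- k mod each prime
  have hk3 : ((k : ℕ) : ZMod 3) = 2 := by rw [hk]; push_cast; rw [hS3]; decide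
  have hk5 : ((k : ℕ) : ZMod 5) = 2 := by rw [hk]; push_cast; rw [hS5]; decide
  have hk7 : ((k : ℕ) : ZMod 7) = 5 := by rw [hk]; push_cast; rw [hS7]; decide
  have hk13 : ((k : ℕ) : ZMod 13) = 7 := by rw [hk]; push_cast; rw [hS13]; decide
  have hk17 : ((k : ℕ) : ZMod 17) = 15 := by rw [hk]; push_cast; rw [hS17]; decide
  have hk241 : ((k : ℕ) : ZMod 241) = 30 := by rw [hk]; push_cast; rw [hS241]; decide
  refine ⟨by omega, ?_, ?_⟩
  · -- odd
    have hS2 : ((S : ℕ) : ZMod 2) = 1 := by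
      rw [cast_S b t 2 (by norm_num) hbmod]
      have h1 : (87 : ZMod 2) = 1 := by decide
      rw [h1]
      simp only [one_pow, Finset.sum_const, Finset.card_range, nsmul_eq_mul, mul_one]
      rw [show ((t : ℕ) : ZMod 2) = ((t % 2 : ℕ) : ZMod 2) from (ZMod.natCast_mod t 2).symm,
        show t % 2 = 1 by omega]
      rfl
    have hk2 : ((k : ℕ) : ZMod 2) = 1 := by rw [hk]; push_cast; rw [hS2]; decide
    rw [Nat.odd_iff]
    rcases Nat.mod_two_eq_zero_or_one k with h | h
    · exfalso
      rw [← ZMod.natCast_mod, h] at hk2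
      exact absurd hk2 (by decide)
    · exact h
  · -- compositeness
    intro n hn
    have h2n : 2 ≤ 2 ^ n := by
      calc 2 = 2 ^ 1 := rfl
      _ ≤ 2 ^ n := Nat.pow_le_pow_right (by norm_num) hn
    have hNge : 7135 ≤ k * 2 ^ n + 1 := by
      have : 3567 * 2 ≤ k * 2 ^ n := Nat.mul_le_mul hkge h2n
      omega
    have pow2 : ∀ (p : ℕ) (h24 : (2 : ZMod p) ^ 24 = 1),
        (2 : ZMod p) ^ n = (2 : ZMod p) ^ (n % 24) := by
      intro p h24
      conv_lhs => rw [show n = 24 * (n / 24) + n % 24 from (Nat.div_add_mod n 24).symm]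
      rw [pow_add, pow_mul, h24, one_pow, one_mul]
    have main : ∃ p : ℕ, 2 ≤ p ∧ p ≤ 241 ∧ p ∣ k * 2 ^ n + 1 := by
      have key : ∀ p : ℕ, ((k * 2 ^ n + 1 : ℕ) : ZMod p) = 0 → p ∣ k * 2 ^ n + 1 := by
        intro p hp
        exact (ZMod.natCast_eq_zero_iff _ _).mp hp
      have hcast : ∀ p : ℕ, ((k * 2 ^ n + 1 : ℕ) : ZMod p) = (k : ZMod p) * (2 : ZMod p) ^ n + 1 := by
        intro p; push_cast; ring
      have pow2' : ∀ (p r : ℕ), (2 : ZMod p) ^ 24 = 1 → n % 24 = r →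
          (2 : ZMod p) ^ n = (2 : ZMod p) ^ r := by
        intro p r h24 hr; rw [← hr]; exact pow2 p h24
      have hcases : n % 24 = 0 ∨ n % 24 = 1 ∨ n % 24 = 2 ∨ n % 24 = 3 ∨ n % 24 = 4 ∨ n % 24 = 5 ∨ n % 24 = 6 ∨ n % 24 = 7 ∨ n % 24 = 8 ∨ n % 24 = 9 ∨ n % 24 = 10 ∨ n % 24 = 11 ∨ n % 24 = 12 ∨ n % 24 = 13 ∨ n % 24 = 14 ∨ n % 24 = 15 ∨ n % 24 = 16 ∨ n % 24 = 17 ∨ n % 24 = 18 ∨ n % 24 = 19 ∨ n % 24 = 20 ∨ n % 24 = 21 ∨ n % 24 = 22 ∨ n % 24 = 23 := by omega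
      rcases hcases with h|h|h|h|h|h|h|h|h|h|h|h|h|h|h|h|h|h|h|h|h|h|h|h
      · exact ⟨3, by norm_num, by norm_num, key 3 (by rw [hcast, hk3, pow2' 3 0 (by decide) h]; decide)⟩
      · exact ⟨5, by norm_num, by norm_num, key 5 (by rw [hcast, hk5, pow2' 5 1 (by decide) h]; decide)⟩
      · exact ⟨3, by norm_num, by norm_num, key 3 (by rw [hcast, hk3, pow2' 3 2 (by decide) h]; decide)⟩
      · exact ⟨241, by norm_num, by norm_num, key 241 (by rw [hcast, hk241, pow2' 241 3 (by decide) h]; decide)⟩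
      · exact ⟨3, by norm_num, by norm_num, key 3 (by rw [hcast, hk3, pow2' 3 4 (by decide) h]; decide)⟩
      · exact ⟨5, by norm_num, by norm_num, key 5 (by rw [hcast, hk5, pow2' 5 5 (by decide) h]; decide)⟩
      · exact ⟨3, by norm_num, by norm_num, key 3 (by rw [hcast, hk3, pow2' 3 6 (by decide) h]; decide)⟩
      · exact ⟨13, by norm_num, by norm_num, key 13 (by rw [hcast, hk13, pow2' 13 7 (by decide) h]; decide)⟩
      · exact ⟨3, by norm_num, by norm_num, key 3 (by rw [hcast, hk3, pow2' 3 8 (by decide) h]; decide)⟩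
      · exact ⟨5, by norm_num, by norm_num, key 5 (by rw [hcast, hk5, pow2' 5 9 (by decide) h]; decide)⟩
      · exact ⟨3, by norm_num, by norm_num, key 3 (by rw [hcast, hk3, pow2' 3 10 (by decide) h]; decide)⟩
      · exact ⟨7, by norm_num, by norm_num, key 7 (by rw [hcast, hk7, pow2' 7 11 (by decide) h]; decide)⟩
      · exact ⟨3, by norm_num, by norm_num, key 3 (by rw [hcast, hk3, pow2' 3 12 (by decide) h]; decide)⟩
      · exact ⟨5, by norm_num, by norm_num, key 5 (by rw [hcast, hk5, pow2' 5 13 (by decide) h]; decide)⟩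
      · exact ⟨3, by norm_num, by norm_num, key 3 (by rw [hcast, hk3, pow2' 3 14 (by decide) h]; decide)⟩
      · exact ⟨17, by norm_num, by norm_num, key 17 (by rw [hcast, hk17, pow2' 17 15 (by decide) h]; decide)⟩
      · exact ⟨3, by norm_num, by norm_num, key 3 (by rw [hcast, hk3, pow2' 3 16 (by decide) h]; decide)⟩
      · exact ⟨5, by norm_num, by norm_num, key 5 (by rw [hcast, hk5, pow2' 5 17 (by decide) h]; decide)⟩
      · exact ⟨3, by norm_num, by norm_num, key 3 (by rw [hcast, hk3, pow2' 3 18 (by decide) h]; decide)⟩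
      · exact ⟨13, by norm_num, by norm_num, key 13 (by rw [hcast, hk13, pow2' 13 19 (by decide) h]; decide)⟩
      · exact ⟨3, by norm_num, by norm_num, key 3 (by rw [hcast, hk3, pow2' 3 20 (by decide) h]; decide)⟩
      · exact ⟨5, by norm_num, by norm_num, key 5 (by rw [hcast, hk5, pow2' 5 21 (by decide) h]; decide)⟩
      · exact ⟨3, by norm_num, by norm_num, key 3 (by rw [hcast, hk3, pow2' 3 22 (by decide) h]; decide)⟩
      · exact ⟨7, by norm_num, by norm_num, key 7 (by rw [hcast, hk7, pow2' 7 23 (by decide) h]; decide)⟩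
    obtain ⟨p, hp2, hp241, hpdvd⟩ := main
    obtain ⟨m, hm⟩ := hpdvd
    refine ⟨p, m, by omega, ?_, hm⟩
    by_contra hm1
    push_neg at hm1
    interval_cases m <;> omega
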